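/- Let r be a positive integer, a_1,…,a_r and b_1,…,b_r positive integers, q ∈ ℂ with 0 < |q| < 1, x ∈ ℝ with x > 0, and let n be a positive odd integer. Then ζ_r(−n, x | a_1,…,a_r; b_1,…,b_r) = E_{n,q}^{(r)}(x | a_1,…,a_r; b_1,…,b_r); that is, the value at s = −n of the multivariate Hurwitz-type q-zeta function equals the n-th iterated derivative at t = 0 of t ↦ 2^r e^{xt} / ∏_{j=1}^r (q^{b_j} e^{a_j t} + 1). -/

import Mathlib

open Finset

private lemma aux_one_add_sum_le_prod {ι : Type*} (s : Finset ι) (t : ι → ℝ)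
    (h : ∀ i, 0 ≤ t i) : 1 + ∑ i ∈ s, t i ≤ ∏ i ∈ s, (1 + t i) := by
  classical
  induction s using Finset.induction with
  | empty => simp
  | insert a s' hi ih =>
    rw [Finset.sum_insert hi, Finset.prod_insert hi]
    have hsnn : 0 ≤ ∑ i ∈ s', t i := Finset.sum_nonneg fun i _ => h i
    nlinarith [h a, ih]

private lemma aux_summable_pi_prod : ∀ (r : ℕ) (f : Fin r → ℕ → ℝ),
    (∀ j, Summable (f j)) → (∀ j m, 0 ≤ f j m) →
    Summable (fun m : Fin r → ℕ => ∏ j, f j (m j)) := by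
  intro r
  induction r with
  | zero =>
    intro f _ _
    have : (fun m : Fin 0 → ℕ => ∏ j, f j (m j)) = fun _ => (1:ℝ) := by
      funext m; simp
    rw [this]
    exact (hasSum_single (f := fun _ : Fin 0 → ℕ => (1:ℝ)) default
      (fun b hb => (hb (Subsingleton.elim b _)).elim)).summable
  | succ r ih =>
    intro f hs h0
    have h1 : Summable (fun p : ℕ × (Fin r → ℕ) => f 0 p.1 * ∏ j, f j.succ (p.2 j)) := by
      apply Summable.mul_of_nonneg (hs 0)
        (ih (fun j => f j.succ) (fun j => hs _) (fun j m => h0 _ _))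
      · intro m; exact h0 0 m
      · intro p; exact Finset.prod_nonneg fun j _ => h0 _ _
    exact ((Fin.consEquiv (fun _ : Fin (r+1) => ℕ)).summable_iff
        (f := fun m : Fin (r+1) → ℕ => ∏ j, f j (m j))).mp
      (h1.congr fun p => by simp [Fin.consEquiv, Fin.prod_univ_succ])

private lemma aux_tsum_pi_prod : ∀ (r : ℕ) (f : Fin r → ℕ → ℂ),
    (∀ j, Summable fun m => ‖f j m‖) →
    ∑' m : Fin r → ℕ, ∏ j, f j (m j) = ∏ j, ∑' m, f j m := by
  intro r
  induction r with
  | zero =>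
    intro f _
    simp only [Finset.univ_eq_empty, Finset.prod_empty]
    exact (hasSum_single (f := fun _ : Fin 0 → ℕ => (1:ℂ)) default
      (fun b hb => (hb (Subsingleton.elim b _)).elim)).tsum_eq.trans rfl
  | succ r ih =>
    intro f hs
    have hnorm : Summable fun m : Fin r → ℕ => ‖∏ j, f j.succ (m j)‖ := by
      have := aux_summable_pi_prod r (fun j m => ‖f j.succ m‖) (fun j => hs _)
        (fun j m => norm_nonneg _)
      refine this.congr fun m => ?_
      rw [norm_prod]
    rw [Fin.prod_univ_succ, ← ih (fun j => f j.succ) (fun j => hs _),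
      tsum_mul_tsum_of_summable_norm (hs 0) hnorm]
    rw [← (Fin.consEquiv (fun _ : Fin (r+1) => ℕ)).tsum_eq
      (fun m : Fin (r+1) → ℕ => ∏ j, f j (m j))]
    refine tsum_congr fun p => ?_
    simp [Fin.consEquiv, Fin.prod_univ_succ]

set_option maxHeartbeats 2000000 in
/-- For `0 < |q| < 1`, real `x > 0` and `n` a positive odd integer, the
multivariate Hurwitz-type `q`-zeta function
`ζ_r(s, x) = 2^r Σ_{n⃗ ∈ ℕ^r} (-1)^{Σ n_j} q^{Σ b_j n_j} (x + Σ a_j n_j)^{-s}`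
evaluated at `s = -n` equals the `n`-th iterated derivative at `t = 0` of
`t ↦ 2^r e^{xt} / ∏_j (q^{b_j} e^{a_j t} + 1)`. -/
theorem changhee_qZeta_interpolates_qEuler
    (r : ℕ) (hr : 0 < r) (a b : Fin r → ℕ)
    (ha : ∀ j, 0 < a j) (hb : ∀ j, 0 < b j)
    (q : ℂ) (hq0 : 0 < ‖q‖) (hq1 : ‖q‖ < 1)
    (x : ℝ) (hx : 0 < x) (n : ℕ) (hn : 0 < n) (hnodd : Odd n)
    (s : ℂ) (hs : s = -(n : ℂ)) :
    (2 : ℂ) ^ r * ∑' m : Fin r → ℕ,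
        (-1 : ℂ) ^ (∑ j, m j) * q ^ (∑ j, b j * m j) *
          (((x + (∑ j, a j * m j : ℕ) : ℝ) : ℂ)) ^ (-s)
      = iteratedDeriv n
          (fun t : ℂ =>
            (2 : ℂ) ^ r * Complex.exp ((x : ℂ) * t) /
              ∏ j, (q ^ (b j) * Complex.exp ((a j : ℂ) * t) + 1)) 0 := by
  classical
  set c : ℝ := ‖q‖ with hcdef
  have hc0 : 0 < c := hq0
  have hc1 : c < 1 := hq1
  set A : ℝ := (∑ j, (a j : ℝ)) + 1 with hAdef
  have hA1 : 1 ≤ A := by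
    have : (0:ℝ) ≤ ∑ j, (a j : ℝ) := Finset.sum_nonneg fun j _ => by positivity
    simp only [hAdef]; linarith
  have hApos : 0 < A := by linarith
  have hAj : ∀ j, (a j : ℝ) ≤ A := by
    intro j
    have h1 : (a j : ℝ) ≤ ∑ i, (a i : ℝ) :=
      Finset.single_le_sum (f := fun i => ((a i : ℝ))) (fun i _ => by positivity)
        (Finset.mem_univ j)
    simp only [hAdef]; linarith
  set L : ℝ := -Real.log c with hLdef
  have hLpos : 0 < L := by
    have := Real.log_neg hc0 hc1
    simp only [hLdef]; linarith
  set R : ℝ := L / (2 * A) with hRdef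
  have hRpos : 0 < R := by positivity
  have hAR : A * R ≤ L / 2 := by
    rw [hRdef]
    rw [mul_div_assoc']
    rw [div_le_div_iff₀ (by positivity) (by norm_num)]
    nlinarith
  -- the geometric ratios
  set ρ : Fin r → ℝ := fun j => c ^ (b j) * Real.exp ((a j : ℝ) * R) with hρdef
  have hρpos : ∀ j, 0 < ρ j := fun j => by positivity
  have hρlt : ∀ j, ρ j < 1 := by
    intro j
    have h1 : c ^ (b j) ≤ c := by
      calc c ^ (b j) ≤ c ^ 1 := pow_le_pow_of_le_one hc0.le hc1.le (hb j)
        _ = c := pow_one c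
    have h2 : Real.exp ((a j : ℝ) * R) ≤ Real.exp (L / 2) := by
      apply Real.exp_le_exp.2
      calc (a j : ℝ) * R ≤ A * R := mul_le_mul_of_nonneg_right (hAj j) hRpos.le
        _ ≤ L / 2 := hAR
    have h3 : ρ j ≤ c * Real.exp (L / 2) := by
      apply mul_le_mul h1 h2 (by positivity) hc0.le
    have h4 : c * Real.exp (L / 2) < 1 := by
      rw [← Real.exp_log hc0, ← Real.exp_add]
      apply Real.exp_lt_one_iff.mpr
      have := Real.log_neg hc0 hc1
      simp only [hLdef]; linarith
    linarith
  -- the frequencies and coefficients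
  set lam : (Fin r → ℕ) → ℝ := fun m => x + ((∑ j, a j * m j : ℕ) : ℝ) with hlamdef
  have hlam0 : ∀ m, 0 < lam m := by
    intro m
    have : (0:ℝ) ≤ ((∑ j, a j * m j : ℕ) : ℝ) := by positivity
    simp only [hlamdef]; linarith
  set cm : (Fin r → ℕ) → ℂ :=
    fun m => (2:ℂ) ^ r * ((-1 : ℂ) ^ (∑ j, m j) * q ^ (∑ j, b j * m j)) with hcmdef
  set u : ℕ → (Fin r → ℕ) → ℝ := fun k m =>
    2 ^ r * Real.exp (x * R) *
      ((1 + x) ^ k * ∏ j, ((1 + (a j : ℝ) * m j) ^ k * ρ j ^ (m j))) with hudef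
  -- key product identity
  have hprodid : ∀ m : Fin r → ℕ,
      c ^ (∑ j, b j * m j) * Real.exp (lam m * R)
        = Real.exp (x * R) * ∏ j, ρ j ^ (m j) := by
    intro m
    have h1 : c ^ (∑ j, b j * m j) = ∏ j, (c ^ (b j)) ^ (m j) := by
      rw [← Finset.prod_pow_eq_pow_sum]
      exact Finset.prod_congr rfl fun j _ => by rw [← pow_mul]
    have hlin : lam m * R = x * R + ∑ j, (m j : ℝ) * ((a j : ℝ) * R) := by
      simp only [hlamdef]
      push_cast
      rw [add_mul, Finset.sum_mul]
      congr 1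
      exact Finset.sum_congr rfl fun j _ => by ring
    have h2 : Real.exp (lam m * R)
        = Real.exp (x * R) * ∏ j, (Real.exp ((a j : ℝ) * R)) ^ (m j) := by
      rw [hlin, Real.exp_add, Real.exp_sum]
      congr 1
      exact Finset.prod_congr rfl fun j _ => by rw [← Real.exp_nat_mul]
    calc c ^ (∑ j, b j * m j) * Real.exp (lam m * R)
        = (∏ j, (c ^ (b j)) ^ (m j)) *
          (Real.exp (x * R) * ∏ j, (Real.exp ((a j : ℝ) * R)) ^ (m j)) := by rw [h1, h2]
      _ = Real.exp (x * R) *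
          ∏ j, ((c ^ (b j)) ^ (m j) * (Real.exp ((a j:ℝ) * R)) ^ (m j)) := by
          rw [Finset.prod_mul_distrib]; ring
      _ = Real.exp (x * R) * ∏ j, ρ j ^ (m j) := by
          congr 1
          exact Finset.prod_congr rfl fun j _ => by simp only [hρdef]; rw [mul_pow]
  -- polynomial bound
  have hpoly : ∀ (k : ℕ) (m : Fin r → ℕ),
      (lam m) ^ k ≤ (1 + x) ^ k * ∏ j, (1 + (a j : ℝ) * m j) ^ k := by
    intro k m
    have h2 := aux_one_add_sum_le_prod (Finset.univ : Finset (Fin r))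
      (fun j => (a j : ℝ) * m j) (fun j => by positivity)
    have hsnn : (0:ℝ) ≤ ∑ j, (a j : ℝ) * m j := Finset.sum_nonneg fun j _ => by positivity
    have h3 : (1:ℝ) ≤ ∏ j, (1 + (a j : ℝ) * m j) := by linarith
    have h1 : lam m ≤ (1 + x) * ∏ j, (1 + (a j : ℝ) * m j) := by
      simp only [hlamdef]
      push_cast
      nlinarith
    calc (lam m) ^ k ≤ ((1 + x) * ∏ j, (1 + (a j : ℝ) * m j)) ^ k :=
          pow_le_pow_left₀ (hlam0 m).le h1 k
      _ = (1 + x) ^ k * ∏ j, (1 + (a j : ℝ) * m j) ^ k := by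
          rw [mul_pow, ← Finset.prod_pow]
  have hkey : ∀ (k : ℕ) (m : Fin r → ℕ),
      2 ^ r * c ^ (∑ j, b j * m j) * (lam m) ^ k * Real.exp (lam m * R) ≤ u k m := by
    intro k m
    have hρprod : (0:ℝ) ≤ ∏ j, ρ j ^ (m j) :=
      Finset.prod_nonneg fun j _ => pow_nonneg (hρpos j).le _
    calc 2 ^ r * c ^ (∑ j, b j * m j) * (lam m) ^ k * Real.exp (lam m * R)
        = 2 ^ r * ((c ^ (∑ j, b j * m j) * Real.exp (lam m * R)) * (lam m) ^ k) := by ring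
      _ = 2 ^ r * ((Real.exp (x * R) * ∏ j, ρ j ^ (m j)) * (lam m) ^ k) := by
          rw [hprodid m]
      _ ≤ 2 ^ r * ((Real.exp (x * R) * ∏ j, ρ j ^ (m j)) *
            ((1 + x) ^ k * ∏ j, (1 + (a j : ℝ) * m j) ^ k)) := by
          apply mul_le_mul_of_nonneg_left
            (mul_le_mul_of_nonneg_left (hpoly k m)
              (mul_nonneg (Real.exp_nonneg _) hρprod)) (by positivity)
      _ = u k m := by
          simp only [hudef]
          rw [Finset.prod_mul_distrib]
          ring
  -- norm bound on the terms
  have hnormg : ∀ (k : ℕ) (m : Fin r → ℕ) (z : ℂ), ‖z‖ ≤ R →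
      ‖cm m * ((lam m : ℝ) : ℂ) ^ k * Complex.exp (((lam m : ℝ) : ℂ) * z)‖ ≤ u k m := by
    intro k m z hz
    have hre : (((lam m : ℝ) : ℂ) * z).re = lam m * z.re := by
      simp [Complex.mul_re]
    have habs : ‖((lam m : ℝ) : ℂ)‖ = lam m := by
      rw [Complex.norm_real, Real.norm_eq_abs, abs_of_pos (hlam0 m)]
    have hnorm : ‖cm m * ((lam m : ℝ) : ℂ) ^ k * Complex.exp (((lam m : ℝ) : ℂ) * z)‖
        = 2 ^ r * c ^ (∑ j, b j * m j) * (lam m) ^ k * Real.exp (lam m * z.re) := by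
      rw [hcmdef]
      simp only [norm_mul, norm_pow, Complex.norm_exp, hre, habs,
        norm_neg, norm_one, one_pow, Complex.norm_two, ← hcdef]
      ring
    rw [hnorm]
    refine le_trans ?_ (hkey k m)
    have hzre : z.re ≤ R := le_trans (Complex.re_le_norm z) hz
    have hexple : Real.exp (lam m * z.re) ≤ Real.exp (lam m * R) :=
      Real.exp_le_exp.2 (mul_le_mul_of_nonneg_left hzre (hlam0 m).le)
    have hnn : (0:ℝ) ≤ 2 ^ r * c ^ (∑ j, b j * m j) * (lam m) ^ k :=
      mul_nonneg (mul_nonneg (by positivity) (pow_nonneg hc0.le _))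
        (pow_nonneg (hlam0 m).le _)
    exact mul_le_mul_of_nonneg_left hexple hnn
  -- summability of the bounds
  have husum : ∀ k : ℕ, Summable (u k) := by
    intro k
    have hv : ∀ j, Summable (fun m : ℕ => (1 + (a j : ℝ) * m) ^ k * ρ j ^ m) := by
      intro j
      have base : Summable fun m : ℕ => ((m:ℝ)) ^ k * ρ j ^ m :=
        summable_pow_mul_geometric_of_norm_lt_one k
          (by rw [Real.norm_eq_abs, abs_of_pos (hρpos j)]; exact hρlt j)
      have shift : Summable fun m : ℕ => (((m+1 : ℕ)):ℝ) ^ k * ρ j ^ (m+1) :=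
        (summable_nat_add_iff 1).2 base
      have shift' : Summable fun m : ℕ => ((m:ℝ) + 1) ^ k * ρ j ^ m := by
        have h2 := shift.mul_right (ρ j)⁻¹
        refine h2.congr fun m => ?_
        have : ρ j ≠ 0 := (hρpos j).ne'
        push_cast
        field_simp
        ring
      have hnn : ∀ m : ℕ, (0:ℝ) ≤ (1 + (a j : ℝ) * m) ^ k * ρ j ^ m := fun m => by
        have : (0:ℝ) ≤ 1 + (a j : ℝ) * m := by positivity
        exact mul_nonneg (pow_nonneg this _) (pow_nonneg (hρpos j).le _)
      have hle : ∀ m : ℕ, (1 + (a j : ℝ) * m) ^ k * ρ j ^ m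
          ≤ (1 + (a j : ℝ)) ^ k * (((m:ℝ) + 1) ^ k * ρ j ^ m) := by
        intro m
        have h1 : (1 + (a j : ℝ) * m) ≤ (1 + (a j : ℝ)) * ((m:ℝ) + 1) := by
          have h0 : (0:ℝ) ≤ (a j : ℝ) := by positivity
          have h0' : (0:ℝ) ≤ (m:ℝ) := by positivity
          nlinarith
        calc (1 + (a j : ℝ) * m) ^ k * ρ j ^ m
            ≤ ((1 + (a j : ℝ)) * ((m:ℝ) + 1)) ^ k * ρ j ^ m := by
              apply mul_le_mul_of_nonneg_right (pow_le_pow_left₀ (by positivity) h1 k)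
                (pow_nonneg (hρpos j).le _)
          _ = (1 + (a j : ℝ)) ^ k * (((m:ℝ) + 1) ^ k * ρ j ^ m) := by rw [mul_pow]; ring
      exact Summable.of_nonneg_of_le hnn hle (shift'.mul_left ((1 + (a j : ℝ)) ^ k))
    have hp := aux_summable_pi_prod r (fun j m => (1 + (a j : ℝ) * m) ^ k * ρ j ^ m) hv
      (fun j m => mul_nonneg (pow_nonneg (by positivity) _) (pow_nonneg (hρpos j).le _))
    rw [hudef]
    exact ((hp.mul_left ((1 + x) ^ k)).mul_left (2 ^ r * Real.exp (x * R)))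
  set G : ℂ → ℂ := fun t => ∑' m : Fin r → ℕ,
    cm m * Complex.exp (((lam m : ℝ) : ℂ) * t) with hGdef
  set S : ℕ → ℂ → ℂ := fun k t => ∑' m : Fin r → ℕ,
    cm m * ((lam m : ℝ) : ℂ) ^ k * Complex.exp (((lam m : ℝ) : ℂ) * t) with hSdef
  -- expansion of the generating function on the ball
  have hFG : Set.EqOn
      (fun t : ℂ => (2 : ℂ) ^ r * Complex.exp ((x : ℂ) * t) /
        ∏ j, (q ^ (b j) * Complex.exp ((a j : ℂ) * t) + 1)) G (Metric.ball 0 R) := by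
    intro t ht
    have htR : ‖t‖ ≤ R := (mem_ball_zero_iff.mp ht).le
    have hwle : ∀ j, ‖q ^ (b j) * Complex.exp ((a j : ℂ) * t)‖ < 1 := by
      intro j
      have h1 : ‖q ^ (b j) * Complex.exp ((a j : ℂ) * t)‖
          = c ^ (b j) * Real.exp ((a j : ℝ) * t.re) := by
        rw [norm_mul, norm_pow, Complex.norm_exp,
          ← hcdef]
        simp [Complex.mul_re]
      rw [h1]
      refine lt_of_le_of_lt ?_ (hρlt j)
      simp only [hρdef]
      have hre : t.re ≤ R := le_trans (Complex.re_le_norm t) htR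
      exact mul_le_mul_of_nonneg_left
        (Real.exp_le_exp.2 (mul_le_mul_of_nonneg_left hre (by positivity)))
        (pow_nonneg hc0.le _)
    have hwlt : ∀ j, ‖-(q ^ (b j) * Complex.exp ((a j : ℂ) * t))‖ < 1 := by
      intro j; rw [norm_neg]; exact hwle j
    have hgeo : ∀ j, Summable fun m : ℕ =>
        ‖(-(q ^ (b j) * Complex.exp ((a j : ℂ) * t))) ^ m‖ := by
      intro j
      simp only [norm_pow]
      exact summable_geometric_of_lt_one (norm_nonneg _) (hwlt j)
    have hterm : ∀ m : Fin r → ℕ,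
        (2:ℂ) ^ r * Complex.exp ((x:ℂ) * t) *
          ∏ j, (-(q ^ (b j) * Complex.exp ((a j : ℂ) * t))) ^ (m j)
        = cm m * Complex.exp (((lam m : ℝ) : ℂ) * t) := by
      intro m
      have e1 : ∀ j : Fin r, (-(q ^ (b j) * Complex.exp ((a j : ℂ) * t))) ^ (m j)
          = (-1 : ℂ) ^ (m j) * q ^ (b j * m j) *
            Complex.exp ((m j : ℂ) * ((a j : ℂ) * t)) := by
        intro j
        rw [neg_pow, mul_pow, ← pow_mul, ← Complex.exp_nat_mul]
        ring
      rw [Finset.prod_congr rfl (fun j _ => e1 j), Finset.prod_mul_distrib,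
        Finset.prod_mul_distrib, Finset.prod_pow_eq_pow_sum, Finset.prod_pow_eq_pow_sum,
        ← Complex.exp_sum]
      have hexp : Complex.exp ((x:ℂ) * t) * Complex.exp (∑ j, (m j : ℂ) * ((a j : ℂ) * t))
          = Complex.exp (((lam m : ℝ) : ℂ) * t) := by
        rw [← Complex.exp_add]
        congr 1
        simp only [hlamdef]
        push_cast
        rw [add_mul, Finset.sum_mul]
        congr 1
        exact Finset.sum_congr rfl fun j _ => by ring
      rw [hcmdef, ← hexp]
      ring
    show (2 : ℂ) ^ r * Complex.exp ((x : ℂ) * t) /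
        ∏ j, (q ^ (b j) * Complex.exp ((a j : ℂ) * t) + 1) = G t
    rw [hGdef]
    calc (2 : ℂ) ^ r * Complex.exp ((x : ℂ) * t) /
        ∏ j, (q ^ (b j) * Complex.exp ((a j : ℂ) * t) + 1)
        = (2:ℂ) ^ r * Complex.exp ((x:ℂ) * t) *
          ∏ j, (q ^ (b j) * Complex.exp ((a j : ℂ) * t) + 1)⁻¹ := by
          rw [div_eq_mul_inv, Finset.prod_inv_distrib]
      _ = (2:ℂ) ^ r * Complex.exp ((x:ℂ) * t) *
          ∏ j, ∑' m : ℕ, (-(q ^ (b j) * Complex.exp ((a j : ℂ) * t))) ^ m := by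
          congr 1
          refine Finset.prod_congr rfl fun j _ => ?_
          rw [tsum_geometric_of_norm_lt_one (hwlt j)]
          congr 1
          ring
      _ = (2:ℂ) ^ r * Complex.exp ((x:ℂ) * t) *
          ∑' m : Fin r → ℕ, ∏ j, (-(q ^ (b j) * Complex.exp ((a j : ℂ) * t))) ^ (m j) := by
          rw [aux_tsum_pi_prod r _ hgeo]
      _ = ∑' m : Fin r → ℕ, (2:ℂ) ^ r * Complex.exp ((x:ℂ) * t) *
          ∏ j, (-(q ^ (b j) * Complex.exp ((a j : ℂ) * t))) ^ (m j) := by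
          rw [tsum_mul_left]
      _ = ∑' m : Fin r → ℕ, cm m * Complex.exp (((lam m : ℝ) : ℂ) * t) :=
          tsum_congr fun m => hterm m
  -- iterated derivatives of G on the ball
  have hiter : ∀ (k : ℕ), ∀ t ∈ Metric.ball (0:ℂ) R, iteratedDeriv k G t = S k t := by
    have hderiv : ∀ (k : ℕ) (m : Fin r → ℕ) (z : ℂ),
        HasDerivAt (fun w => cm m * ((lam m : ℝ) : ℂ) ^ k *
            Complex.exp (((lam m : ℝ) : ℂ) * w))
          (cm m * ((lam m : ℝ) : ℂ) ^ (k+1) * Complex.exp (((lam m : ℝ) : ℂ) * z)) z := by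
      intro k m z
      have h1 : HasDerivAt (fun w : ℂ => ((lam m : ℝ) : ℂ) * w) (((lam m : ℝ) : ℂ) * 1) z :=
        (hasDerivAt_id z).const_mul _
      have h2 := h1.cexp
      have h3 := h2.const_mul (cm m * ((lam m : ℝ) : ℂ) ^ k)
      refine h3.congr_deriv ?_
      rw [pow_succ]
      ring
    have hsum0 : ∀ k : ℕ, Summable (fun m : Fin r → ℕ =>
        cm m * ((lam m : ℝ) : ℂ) ^ k * Complex.exp (((lam m : ℝ) : ℂ) * 0)) := by
      intro k
      apply Summable.of_norm_bounded (husum k)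
      intro m
      exact hnormg k m 0 (by simp [hRpos.le])
    intro k
    induction k with
    | zero =>
      intro t ht
      rw [iteratedDeriv_zero, hGdef, hSdef]
      exact tsum_congr fun m => by rw [pow_zero, mul_one]
    | succ k ih =>
      intro t ht
      rw [iteratedDeriv_succ]
      have hev : iteratedDeriv k G =ᶠ[nhds t] S k :=
        Filter.eventuallyEq_of_mem (Metric.isOpen_ball.mem_nhds ht) ih
      rw [hev.deriv_eq, hSdef]
      have hd := hasDerivAt_tsum_of_isPreconnected (husum (k+1)) Metric.isOpen_ball
        ((convex_ball (0:ℂ) R).isPreconnected) (fun m y _ => hderiv k m y)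
        (fun m y hy => hnormg (k+1) m y (le_of_lt (mem_ball_zero_iff.mp hy)))
        (Metric.mem_ball_self hRpos) (hsum0 k) ht
      exact hd.deriv
  -- conclusion
  have h0ball : (0:ℂ) ∈ Metric.ball (0:ℂ) R := Metric.mem_ball_self hRpos
  have hev : (fun t : ℂ => (2 : ℂ) ^ r * Complex.exp ((x : ℂ) * t) /
        ∏ j, (q ^ (b j) * Complex.exp ((a j : ℂ) * t) + 1)) =ᶠ[nhds (0:ℂ)] G :=
    Filter.eventuallyEq_of_mem (Metric.isOpen_ball.mem_nhds h0ball) hFG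
  rw [hev.iteratedDeriv_eq n, hiter n 0 h0ball]
  rw [← tsum_mul_left]
  apply tsum_congr
  intro m
  rw [hs, neg_neg, Complex.cpow_natCast]
  simp only [hcmdef, hSdef, hlamdef, mul_zero, Complex.exp_zero, mul_one]
  ring
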